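/- There is a well-defined surjective k-algebra homomorphism from the S_n-invariant part of the Milnor ring of F_{k,n} onto the Milnor ring of G_{k,n}, i.e. J_{F_{k,n}}^{S_n} ↠ J_{G_{k,n}}, induced by the identification k[x]^{S_n} ≅ k[y], y_j = σ_j(x). -/

import Mathlib

open MvPolynomial

noncomputable def milnorIdeal (K : Type) [Field K] (n k : ℕ) : Ideal (MvPolynomial (Fin n) K) :=
  Ideal.span (Set.range fun i : Fin n => (X i : MvPolynomial (Fin n) K) ^ (k - 1))

noncomputable abbrev MilnorRing (K : Type) [Field K] (n k : ℕ) :=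
  MvPolynomial (Fin n) K ⧸ milnorIdeal K n k

noncomputable def permAct (K : Type) [Field K] (n k : ℕ) (σ : Equiv.Perm (Fin n)) :
    MilnorRing K n k →ₐ[K] MilnorRing K n k :=
  Ideal.Quotient.liftₐ (milnorIdeal K n k)
    ((Ideal.Quotient.mkₐ K (milnorIdeal K n k)).comp (rename σ)) (by
      intro a ha
      simp only [AlgHom.comp_apply, Ideal.Quotient.mkₐ_eq_mk]
      rw [Ideal.Quotient.eq_zero_iff_mem]
      have hmap : (milnorIdeal K n k).map (rename (R := K) σ) ≤ milnorIdeal K n k := by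
        rw [milnorIdeal, Ideal.map_span]
        apply Ideal.span_le.2
        rintro _ ⟨_, ⟨i, rfl⟩, rfl⟩
        simp only [map_pow, rename_X]
        exact Ideal.subset_span ⟨σ i, rfl⟩
      exact hmap (Ideal.mem_map_of_mem _ ha))

noncomputable def vandermonde (K : Type) [Field K] (n : ℕ) : MvPolynomial (Fin n) K :=
  ∏ i : Fin n, ∏ j ∈ Finset.Ioi i, (X i - X j)

noncomputable def antisym (K : Type) [Field K] (n k : ℕ) : Submodule K (MilnorRing K n k) :=
  ⨅ σ : Equiv.Perm (Fin n),
    Module.End.eigenspace (permAct K n k σ).toLinearMap ((Equiv.Perm.sign σ : ℤ) : K)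

noncomputable def invSubalg (K : Type) [Field K] (n k : ℕ) : Subalgebra K (MilnorRing K n k) where
  carrier := {a | ∀ σ, permAct K n k σ a = a}
  mul_mem' := fun ha hb => fun σ => by rw [map_mul, ha σ, hb σ]
  add_mem' := fun ha hb => fun σ => by rw [map_add, ha σ, hb σ]
  one_mem' := fun σ => map_one _
  zero_mem' := fun σ => map_zero _
  algebraMap_mem' := fun r σ => (permAct K n k σ).commutes r


section InvMilnorAux

variable {K : Type} [Field K]

private lemma pderiv_aeval_eq {n : ℕ} (f : Fin n → MvPolynomial (Fin n) K) (i : Fin n)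
    (p : MvPolynomial (Fin n) K) :
    pderiv i (aeval f p) = ∑ j, aeval f (pderiv j p) * pderiv i (f j) := by
  induction p using MvPolynomial.induction_on with
  | C r => simp
  | add p q hp hq =>
    simp only [map_add, hp, hq, add_mul, Finset.sum_add_distrib]
  | mul_X p j hp =>
    classical
    simp only [map_mul, aeval_X, pderiv_mul, hp]
    have hr : ∀ m : Fin n, aeval f (pderiv m p * X j + p * pderiv m (X j)) * pderiv i (f m)
        = aeval f (pderiv m p) * pderiv i (f m) * f j
          + (if m = j then aeval f p * pderiv i (f m) else 0) := by
      intro m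
      rw [map_add, map_mul, map_mul, aeval_X, pderiv_X]
      by_cases h : m = j
      · subst h; simp [Pi.single_apply]; ring
      · simp [Pi.single_apply, Ne.symm h, h]; ring
    conv_rhs => rw [Finset.sum_congr rfl fun m _ => hr m]
    rw [Finset.sum_add_distrib, Finset.sum_ite_eq' Finset.univ j
      (fun m => aeval f p * pderiv i (f m)), Finset.sum_mul]
    simp [add_comm]

private lemma isSymmetric_sum_rename {n : ℕ} (p : MvPolynomial (Fin n) K) :
    IsSymmetric (∑ τ : Equiv.Perm (Fin n), rename (⇑τ) p) := by
  intro ρ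
  rw [map_sum]
  calc ∑ τ : Equiv.Perm (Fin n), rename (⇑ρ) (rename (⇑τ) p)
      = ∑ τ : Equiv.Perm (Fin n), (fun τ' : Equiv.Perm (Fin n) => rename (⇑τ') p)
          (Equiv.mulLeft ρ τ) := by
        refine Finset.sum_congr rfl fun τ _ => ?_
        rw [rename_rename]
        simp [Equiv.Perm.coe_mul]
    _ = _ := by
        simpa using Equiv.sum_comp (Equiv.mulLeft ρ)
          (fun τ' : Equiv.Perm (Fin n) => rename (⇑τ') p)

private lemma phi_eq {n : ℕ} (q : MvPolynomial (Fin n) K) :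
    aeval (fun j : Fin n => esymm (Fin n) K ((j : ℕ) + 1)) q
      = (esymmAlgHom (Fin n) K n q : MvPolynomial (Fin n) K) :=
  (esymmAlgHom_apply q).symm

private lemma phi_symmetric {n : ℕ} (q : MvPolynomial (Fin n) K) :
    (aeval (fun j : Fin n => esymm (Fin n) K ((j : ℕ) + 1)) q).IsSymmetric := by
  rw [phi_eq]
  exact (mem_symmetricSubalgebra _).1 (esymmAlgHom (Fin n) K n q).2

private lemma phi_injective {n : ℕ} :
    Function.Injective (aeval (fun j : Fin n => esymm (Fin n) K ((j : ℕ) + 1)) :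
      MvPolynomial (Fin n) K → MvPolynomial (Fin n) K) := by
  intro a b h
  refine esymmAlgHom_injective (σ := Fin n) (R := K) (by simp) (Subtype.ext ?_)
  rw [← phi_eq, ← phi_eq]; exact h

private lemma milnor_le_map {n k : ℕ} [CharZero K] (hk : n < k) (G : MvPolynomial (Fin n) K)
    (hG : aeval (fun j : Fin n => esymm (Fin n) K ((j : ℕ) + 1)) G = ∑ i : Fin n, X i ^ k) :
    milnorIdeal K n k ≤
      (Ideal.span (Set.range fun j : Fin n => pderiv j G)).map
        (aeval (fun j : Fin n => esymm (Fin n) K ((j : ℕ) + 1)) :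
          MvPolynomial (Fin n) K →ₐ[K] MvPolynomial (Fin n) K) := by
  classical
  rw [milnorIdeal, Ideal.span_le]
  rintro _ ⟨i, rfl⟩
  have hd := congrArg (pderiv i) hG
  rw [pderiv_aeval_eq, map_sum] at hd
  have hR : ∑ m : Fin n, pderiv i (X m ^ k) = (k : MvPolynomial (Fin n) K) * X i ^ (k - 1) := by
    rw [Finset.sum_eq_single i]
    · rw [pderiv_pow, pderiv_X_self, mul_one]
    · intro m _ hm
      rw [pderiv_pow, pderiv_X_of_ne hm, mul_zero]
    · simp
  rw [hR] at hd
  have hk0 : (k : K) ≠ 0 := Nat.cast_ne_zero.2 (by omega)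
  have hmem : (k : MvPolynomial (Fin n) K) * X i ^ (k - 1) ∈
      (Ideal.span (Set.range fun j : Fin n => pderiv j G)).map
        (aeval (fun j : Fin n => esymm (Fin n) K ((j : ℕ) + 1)) :
          MvPolynomial (Fin n) K →ₐ[K] MvPolynomial (Fin n) K) := by
    rw [← hd]
    refine Ideal.sum_mem _ fun j _ => Ideal.mul_mem_right _ _ ?_
    exact Ideal.mem_map_of_mem _ (Ideal.subset_span ⟨j, rfl⟩)
  have := Ideal.mul_mem_left _ (C ((k : K)⁻¹)) hmem
  rwa [← mul_assoc, ← C_eq_coe_nat, ← C_mul, inv_mul_cancel₀ hk0, map_one, one_mul] at this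

private lemma key_mem {n k : ℕ} [CharZero K] (hk : n < k) (G : MvPolynomial (Fin n) K)
    (hG : aeval (fun j : Fin n => esymm (Fin n) K ((j : ℕ) + 1)) G = ∑ i : Fin n, X i ^ k)
    (q : MvPolynomial (Fin n) K)
    (hq : aeval (fun j : Fin n => esymm (Fin n) K ((j : ℕ) + 1)) q ∈ milnorIdeal K n k) :
    q ∈ Ideal.span (Set.range fun j : Fin n => pderiv j G) := by
  classical
  set φ : MvPolynomial (Fin n) K →ₐ[K] MvPolynomial (Fin n) K :=
    aeval (fun j : Fin n => esymm (Fin n) K ((j : ℕ) + 1)) with hφ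
  set g : Fin n → MvPolynomial (Fin n) K := fun j => pderiv j G with hg
  have h2 : φ q ∈ (Ideal.span (Set.range g)).map φ := milnor_le_map hk G hG hq
  rw [Ideal.map_span, ← Set.range_comp, Ideal.mem_span_range_iff_exists_fun] at h2
  obtain ⟨c, hc⟩ := h2
  have hfac : ((n.factorial : K)) ≠ 0 := Nat.cast_ne_zero.2 (Nat.factorial_ne_zero n)
  have hτ : ∀ τ : Equiv.Perm (Fin n),
      ∑ j, rename (⇑τ) (c j) * φ (g j) = φ q := by
    intro τ
    have := congrArg (rename (⇑τ)) hc
    rw [map_sum] at this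
    calc ∑ j, rename (⇑τ) (c j) * φ (g j)
        = ∑ j, rename (⇑τ) (c j * (φ ∘ g) j) := by
          refine Finset.sum_congr rfl fun j _ => ?_
          rw [map_mul]
          congr 1
          exact (phi_symmetric (g j) τ).symm
      _ = rename (⇑τ) (φ q) := this
      _ = φ q := phi_symmetric q τ
  set b : Fin n → MvPolynomial (Fin n) K :=
    fun j => ((n.factorial : K))⁻¹ • ∑ τ : Equiv.Perm (Fin n), rename (⇑τ) (c j) with hb
  have hbsym : ∀ j, (b j).IsSymmetric := by
    intro j ρ
    rw [hb]
    simp only [map_smul]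
    rw [isSymmetric_sum_rename (c j) ρ]
  have hbsum : ∑ j, b j * φ (g j) = φ q := by
    have swap : ∑ τ : Equiv.Perm (Fin n), ∑ j, rename (⇑τ) (c j) * φ (g j)
        = ∑ j, (∑ τ : Equiv.Perm (Fin n), rename (⇑τ) (c j)) * φ (g j) := by
      rw [Finset.sum_comm]
      exact Finset.sum_congr rfl fun j _ => (Finset.sum_mul _ _ _).symm
    have htot : ∑ j, (∑ τ : Equiv.Perm (Fin n), rename (⇑τ) (c j)) * φ (g j)
        = (n.factorial : ℕ) • φ q := by
      rw [← swap, Finset.sum_congr rfl fun τ _ => hτ τ, Finset.sum_const,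
        Finset.card_univ, Fintype.card_perm, Fintype.card_fin]
    calc ∑ j, b j * φ (g j)
        = ((n.factorial : K))⁻¹ • ∑ j, (∑ τ : Equiv.Perm (Fin n), rename (⇑τ) (c j)) * φ (g j) := by
          rw [Finset.smul_sum]
          exact Finset.sum_congr rfl fun j _ => smul_mul_assoc _ _ _
      _ = ((n.factorial : K))⁻¹ • ((n.factorial : ℕ) • φ q) := by rw [htot]
      _ = φ q := by
          rw [← Nat.cast_smul_eq_nsmul K, smul_smul, inv_mul_cancel₀ hfac, one_smul]
  have hex : ∀ j, ∃ t, φ t = b j := by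
    intro j
    obtain ⟨t, ht⟩ := esymmAlgHom_surjective (σ := Fin n) (R := K) (n := n) (by simp)
      ⟨b j, (mem_symmetricSubalgebra _).2 (hbsym j)⟩
    exact ⟨t, by rw [hφ]; show aeval _ t = b j; rw [phi_eq, ht]⟩
  choose t ht using hex
  have : φ (∑ j, t j * g j) = φ q := by
    rw [map_sum, ← hbsum]
    exact Finset.sum_congr rfl fun j _ => by rw [map_mul, ht j]
  rw [← phi_injective this]
  exact Ideal.sum_mem _ fun j _ => Ideal.mul_mem_left _ _ (Ideal.subset_span ⟨j, rfl⟩)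

private lemma permAct_mk (K : Type) [Field K] (n k : ℕ) (τ : Equiv.Perm (Fin n))
    (p : MvPolynomial (Fin n) K) :
    permAct K n k τ (Ideal.Quotient.mk (milnorIdeal K n k) p)
      = Ideal.Quotient.mk (milnorIdeal K n k) (rename (⇑τ) p) := by
  simp [permAct]
  rfl

private lemma exists_symm_rep {n k : ℕ} [CharZero K] (a : MilnorRing K n k)
    (ha : ∀ τ : Equiv.Perm (Fin n), permAct K n k τ a = a) :
    ∃ q : MvPolynomial (Fin n) K,
      Ideal.Quotient.mk (milnorIdeal K n k)
        (aeval (fun j : Fin n => esymm (Fin n) K ((j : ℕ) + 1)) q) = a := by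
  classical
  obtain ⟨p, hp⟩ := Ideal.Quotient.mk_surjective a
  have hfac : ((n.factorial : K)) ≠ 0 := Nat.cast_ne_zero.2 (Nat.factorial_ne_zero n)
  set p' : MvPolynomial (Fin n) K :=
    ((n.factorial : K))⁻¹ • ∑ τ : Equiv.Perm (Fin n), rename (⇑τ) p with hp'
  have hsym : p'.IsSymmetric := by
    intro ρ
    rw [hp']
    simp only [map_smul]
    rw [isSymmetric_sum_rename p ρ]
  obtain ⟨q, hq⟩ := esymmAlgHom_surjective (σ := Fin n) (R := K) (n := n) (by simp)
    ⟨p', (mem_symmetricSubalgebra _).2 hsym⟩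
  refine ⟨q, ?_⟩
  have hq' : aeval (fun j : Fin n => esymm (Fin n) K ((j : ℕ) + 1)) q = p' := by
    rw [phi_eq, hq]
  rw [hq']
  have this2 : Ideal.Quotient.mkₐ K (milnorIdeal K n k) p'
      = ((n.factorial : K))⁻¹ • ∑ τ : Equiv.Perm (Fin n),
          Ideal.Quotient.mkₐ K (milnorIdeal K n k) (rename (⇑τ) p) := by
    rw [hp', map_smul, map_sum]
  have : Ideal.Quotient.mk (milnorIdeal K n k) p'
      = ((n.factorial : K))⁻¹ • ∑ τ : Equiv.Perm (Fin n),
          Ideal.Quotient.mk (milnorIdeal K n k) (rename (⇑τ) p) := by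
    simpa [Ideal.Quotient.mkₐ_eq_mk] using this2
  rw [this]
  have hterm : ∀ τ : Equiv.Perm (Fin n),
      Ideal.Quotient.mk (milnorIdeal K n k) (rename (⇑τ) p) = a := by
    intro τ
    rw [← permAct_mk, hp, ha τ]
  rw [Finset.sum_congr rfl fun τ _ => hterm τ, Finset.sum_const, Finset.card_univ,
    Fintype.card_perm, Fintype.card_fin, ← Nat.cast_smul_eq_nsmul K, smul_smul,
    inv_mul_cancel₀ hfac, one_smul]

end InvMilnorAux

/-- There is a surjective `K`-algebra homomorphism from the `S_n`-invariant part of the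
Milnor ring of `F_{k,n}` onto the Milnor ring of `G_{k,n}`, sending the class of a
symmetric polynomial `q(σ(x))` to the class of `q(y)`. -/
theorem invariants_surject_onto_milnor_G (K : Type) [Field K] [CharZero K] (n k : ℕ)
    (hk : n < k) (G : MvPolynomial (Fin n) K)
    (hG : aeval (fun j : Fin n => esymm (Fin n) K ((j : ℕ) + 1)) G
        = ∑ i : Fin n, X i ^ k) :
    ∃ ψ : invSubalg K n k →ₐ[K]
        (MvPolynomial (Fin n) K ⧸ Ideal.span (Set.range fun j : Fin n => pderiv j G)),
      Function.Surjective ψ ∧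
        ∀ (q : MvPolynomial (Fin n) K) (a : invSubalg K n k),
          (a : MilnorRing K n k) =
              Ideal.Quotient.mk (milnorIdeal K n k)
                (aeval (fun j : Fin n => esymm (Fin n) K ((j : ℕ) + 1)) q) →
            ψ a = Ideal.Quotient.mk
              (Ideal.span (Set.range fun j : Fin n => pderiv j G)) q := by
  classical
  set φ : MvPolynomial (Fin n) K →ₐ[K] MvPolynomial (Fin n) K :=
    aeval (fun j : Fin n => esymm (Fin n) K ((j : ℕ) + 1)) with hφ
  set J : Ideal (MvPolynomial (Fin n) K) :=
    Ideal.span (Set.range fun j : Fin n => pderiv j G) with hJ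
  set Θ : MvPolynomial (Fin n) K →ₐ[K] MilnorRing K n k :=
    (Ideal.Quotient.mkₐ K (milnorIdeal K n k)).comp φ with hΘ
  have hΘapply : ∀ q, Θ q = Ideal.Quotient.mk (milnorIdeal K n k) (φ q) := fun q => rfl
  have hΘmem : ∀ q, Θ q ∈ invSubalg K n k := by
    intro q τ
    rw [hΘapply, permAct_mk, (phi_symmetric q τ : rename (⇑τ) (φ q) = φ q)]
  set Θ' : MvPolynomial (Fin n) K →ₐ[K] (invSubalg K n k) :=
    Θ.codRestrict (invSubalg K n k) hΘmem with hΘ'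
  have hΘ'val : ∀ q, (Θ' q : MilnorRing K n k)
      = Ideal.Quotient.mk (milnorIdeal K n k) (φ q) := fun q => rfl
  have hsurj : Function.Surjective Θ' := by
    intro a
    obtain ⟨q, hq⟩ := exists_symm_rep (K := K) (a : MilnorRing K n k) a.2
    exact ⟨q, Subtype.ext (by rw [hΘ'val]; exact hq)⟩
  have hker : RingHom.ker Θ' ≤ J := by
    intro q hq
    have h0 : (Θ' q : MilnorRing K n k) = 0 := by
      rw [RingHom.mem_ker] at hq
      rw [hq]; rfl
    rw [hΘ'val, Ideal.Quotient.eq_zero_iff_mem] at h0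
    exact key_mem hk G hG q h0
  set ρ : (MvPolynomial (Fin n) K ⧸ RingHom.ker Θ') →ₐ[K] (MvPolynomial (Fin n) K ⧸ J) :=
    Ideal.Quotient.liftₐ (RingHom.ker Θ') (Ideal.Quotient.mkₐ K J) (fun a ha => by
      rw [Ideal.Quotient.mkₐ_eq_mk, Ideal.Quotient.eq_zero_iff_mem]
      exact hker ha) with hρ
  set e := Ideal.quotientKerAlgEquivOfSurjective hsurj with he
  refine ⟨ρ.comp e.symm.toAlgHom, ?_, ?_⟩
  · intro z
    obtain ⟨q, hq⟩ := Ideal.Quotient.mk_surjective z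
    refine ⟨Θ' q, ?_⟩
    have h1 : e.symm (Θ' q) = Ideal.Quotient.mk (RingHom.ker Θ') q := by
      rw [AlgEquiv.symm_apply_eq, he]
      show Θ' q = Ideal.kerLiftAlg Θ' (Ideal.Quotient.mk (RingHom.ker Θ') q)
      exact (Ideal.kerLiftAlg_mk Θ' q).symm
    simp only [AlgHom.comp_apply, AlgEquiv.toAlgHom_eq_coe, AlgHom.coe_coe, AlgEquiv.coe_toAlgHom]
    rw [h1, hρ]
    exact hq
  · intro q a hqa
    have hΘ'q : Θ' q = a := Subtype.ext (by rw [hΘ'val, ← hqa])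
    have h1 : e.symm a = Ideal.Quotient.mk (RingHom.ker Θ') q := by
      rw [AlgEquiv.symm_apply_eq, he, ← hΘ'q]
      show Θ' q = Ideal.kerLiftAlg Θ' (Ideal.Quotient.mk (RingHom.ker Θ') q)
      exact (Ideal.kerLiftAlg_mk Θ' q).symm
    simp only [AlgHom.comp_apply, AlgEquiv.toAlgHom_eq_coe, AlgHom.coe_coe, AlgEquiv.coe_toAlgHom]
    rw [h1, hρ]
    simp
    rfl
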